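/- Let d be a nonzero rational number, let x be a p-adic integer (for an odd prime p), and let n be a nonnegative integer. Then ∑_{k=0}^{n−1} (x² + x + 2d − (1+4d)k² − (1+2d)k) · d^{−k} C(x,k)C(x+k,k)/((k+1)C(2k,k)) = 2d + 2(2n−1)·C(x,n)C(x+n,n)/(d^{n−1} C(2n,n)), as an identity in ℚ_p. -/

import Mathlib

/-- Generalized binomial coefficient `C(x, k) = x(x-1)⋯(x-k+1)/k!` in `ℚ_[p]`. -/
noncomputable def gbinom (p : ℕ) [Fact p.Prime] (x : ℚ_[p]) (k : ℕ) : ℚ_[p] :=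
  (∏ i ∈ Finset.range k, (x - (i : ℚ_[p]))) / (k.factorial : ℚ_[p])

lemma gbinom_succ' (p : ℕ) [Fact p.Prime] (x : ℚ_[p]) (n : ℕ) :
    gbinom p x (n+1) = gbinom p x n * (x - n) / (n+1) := by
  unfold gbinom
  rw [Finset.prod_range_succ, Nat.factorial_succ]
  have h1 : ((n+1 : ℕ) : ℚ_[p]) ≠ 0 := Nat.cast_ne_zero.mpr (Nat.succ_ne_zero n)
  have h2 : ((n.factorial : ℕ) : ℚ_[p]) ≠ 0 := Nat.cast_ne_zero.mpr n.factorial_ne_zero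
  field_simp
  push_cast; ring

lemma gbinom_shift' (p : ℕ) [Fact p.Prime] (x : ℚ_[p]) (n : ℕ) :
    gbinom p (x + ((n:ℚ_[p])+1)) (n+1) = gbinom p (x + (n:ℚ_[p])) n * (x + n + 1) / (n+1) := by
  unfold gbinom
  rw [Finset.prod_range_succ', Nat.factorial_succ]
  have h1 : ((n+1 : ℕ) : ℚ_[p]) ≠ 0 := Nat.cast_ne_zero.mpr (Nat.succ_ne_zero n)
  have h2 : ((n.factorial : ℕ) : ℚ_[p]) ≠ 0 := Nat.cast_ne_zero.mpr n.factorial_ne_zero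
  have he : ∀ i ∈ Finset.range n, x + ((n:ℚ_[p])+1) - ((i+1 : ℕ):ℚ_[p]) = x + (n:ℚ_[p]) - i := by
    intro i _; push_cast; ring
  rw [Finset.prod_congr rfl he]
  field_simp
  push_cast; ring

theorem step_key {F : Type*} [Field F] [NeZero (2:F)] (D C G H X N E K M : F) (hD : D ≠ 0) (hC : C ≠ 0)
    (hK : K ≠ 0) (hM : M ≠ 0) (hE : E ≠ 0) (hKN : K = N+1) (hMN : M = 2*N+1) :
  2*D + 2*(2*N-1)*G*H/(E/D*C) + (X^2+X+2*D-(1+4*D)*N^2-(1+2*D)*N) * (E⁻¹*G*H/(K*C))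
  = 2*D + 2*(2*(N+1)-1)*(G*(X-N)/K)*(H*(X+N+1)/K)*K/(E*(2*M*C)) := by
  have hEDC : E/D*C ≠ 0 := by simp [hE, hD, hC]
  have hKC : K*C ≠ 0 := mul_ne_zero hK hC
  have hden : E*(2*M*C) ≠ 0 :=
    mul_ne_zero hE (mul_ne_zero (mul_ne_zero two_ne_zero hM) hC)
  rw [add_assoc]
  congr 1
  rw [mul_div_assoc', div_add_div _ _ hEDC hKC, div_eq_div_iff (mul_ne_zero hEDC hKC) hden]
  subst hKN hMN
  field_simp
  ring

theorem stmt16 (p : ℕ) [Fact p.Prime] (hp : Odd p)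
    (d : ℚ) (hd0 : d ≠ 0) (x : ℤ_[p]) (n : ℕ) :
    (∑ k ∈ Finset.range n,
        ((x : ℚ_[p]) ^ 2 + (x : ℚ_[p]) + 2 * (d : ℚ_[p])
            - (1 + 4 * (d : ℚ_[p])) * (k : ℚ_[p]) ^ 2
            - (1 + 2 * (d : ℚ_[p])) * (k : ℚ_[p])) *
          ((d : ℚ_[p]) ^ (-(k : ℤ)) * gbinom p (x : ℚ_[p]) k * gbinom p ((x : ℚ_[p]) + (k : ℚ_[p])) k
            / (((k : ℚ_[p]) + 1) * (((2 * k).choose k : ℕ) : ℚ_[p])))) =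
      2 * (d : ℚ_[p]) +
        2 * (2 * (n : ℚ_[p]) - 1) * gbinom p (x : ℚ_[p]) n * gbinom p ((x : ℚ_[p]) + (n : ℚ_[p])) n
          / ((d : ℚ_[p]) ^ ((n : ℤ) - 1) * (((2 * n).choose n : ℕ) : ℚ_[p])) := by
  have hD : (d : ℚ_[p]) ≠ 0 := by exact_mod_cast Rat.cast_ne_zero.mpr hd0
  induction n with
  | zero =>
      simp [gbinom, zpow_neg, zpow_sub₀ hD]
  | succ n ih =>
      have hn1 : ((n:ℚ_[p]) + 1) ≠ 0 := by
        have := Nat.cast_ne_zero (R := ℚ_[p]).mpr (Nat.succ_ne_zero n)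
        push_cast at this; exact this
      have hcbn : (((2*n).choose n : ℕ) : ℚ_[p]) ≠ 0 :=
        Nat.cast_ne_zero.mpr (Nat.centralBinom_pos n).ne'
      have hcb : (((2*(n+1)).choose (n+1) : ℕ) : ℚ_[p])
          = 2 * (2*(n:ℚ_[p]) + 1) * (((2*n).choose n : ℕ) : ℚ_[p]) / ((n:ℚ_[p]) + 1) := by
        have h2 := Nat.succ_mul_centralBinom_succ n
        simp only [Nat.centralBinom] at h2
        have h3 : ((n:ℚ_[p])+1) * (((2*(n+1)).choose (n+1) : ℕ) : ℚ_[p])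
            = 2*(2*(n:ℚ_[p])+1)*(((2*n).choose n : ℕ) : ℚ_[p]) := by exact_mod_cast h2
        rw [eq_div_iff hn1]
        linear_combination h3
      rw [Finset.sum_range_succ, ih, hcb]
      rw [show ((n+1:ℕ):ℚ_[p]) = (n:ℚ_[p]) + 1 from by push_cast; ring,
        show (((n+1:ℕ)):ℤ) - 1 = (n:ℤ) from by push_cast; ring]
      rw [gbinom_succ', gbinom_shift']
      rw [zpow_neg, zpow_natCast, zpow_sub₀ hD, zpow_natCast, zpow_one]
      have hdn : (d:ℚ_[p])^n ≠ 0 := pow_ne_zero _ hD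
      have h2n1 : 2*(n:ℚ_[p]) + 1 ≠ 0 := by
        have := Nat.cast_ne_zero (R := ℚ_[p]).mpr (Nat.succ_ne_zero (2*n))
        push_cast at this
        intro h; exact this (by linear_combination h)
      rw [show (d:ℚ_[p])^n * (2*(2*(n:ℚ_[p])+1)*(((2*n).choose n : ℕ):ℚ_[p])/((n:ℚ_[p])+1))
          = ((d:ℚ_[p])^n * (2*(2*(n:ℚ_[p])+1)*(((2*n).choose n : ℕ):ℚ_[p])))/((n:ℚ_[p])+1) from
        (mul_div_assoc _ _ _).symm, div_div_eq_mul_div]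
      exact step_key _ _ _ _ _ _ _ _ _ hD hcbn hn1 h2n1 hdn rfl rfl
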